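/- Let H be an inner product space, x_1,…,x_n ∈ H, and k ≥ 1 such that ‖x_i‖·‖x_j‖ ≤ k·Re⟨x_i, x_j⟩ for all 1 ≤ i < j ≤ n. Then (∑_{i=1}^n ‖x_i‖)² + (k − 1)·∑_{i=1}^n ‖x_i‖² ≤ k·‖∑_{i=1}^n x_i‖². -/

import Mathlib

theorem stmt_16 {𝕜 H : Type*} [RCLike 𝕜] [NormedAddCommGroup H] [InnerProductSpace 𝕜 H]
    (n : ℕ) (x : ℕ → H) (k : ℝ) (hk : 1 ≤ k)
    (h : ∀ i ∈ Finset.Icc 1 n, ∀ j ∈ Finset.Icc 1 n, i < j →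
      ‖x i‖ * ‖x j‖ ≤ k * RCLike.re (inner 𝕜 (x i) (x j) : 𝕜)) :
    (∑ i ∈ Finset.Icc 1 n, ‖x i‖) ^ 2 + (k - 1) * ∑ i ∈ Finset.Icc 1 n, ‖x i‖ ^ 2 ≤
      k * ‖∑ i ∈ Finset.Icc 1 n, x i‖ ^ 2 := by
  set s := Finset.Icc 1 n with hs
  have hre : ∀ i j : ℕ, RCLike.re (inner 𝕜 (x j) (x i) : 𝕜) =
      RCLike.re (inner 𝕜 (x i) (x j) : 𝕜) := by
    intro i j; rw [← inner_conj_symm, RCLike.conj_re]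
  have hnorm : (‖∑ i ∈ s, x i‖ : ℝ) ^ 2 =
      ∑ i ∈ s, ∑ j ∈ s, RCLike.re (inner 𝕜 (x i) (x j) : 𝕜) := by
    rw [← @inner_self_eq_norm_sq 𝕜, sum_inner, map_sum]
    refine Finset.sum_congr rfl fun i _ => ?_
    rw [inner_sum, map_sum]
  have hsum : (∑ i ∈ s, ‖x i‖) ^ 2 = ∑ i ∈ s, ∑ j ∈ s, ‖x i‖ * ‖x j‖ := by
    rw [sq, Finset.sum_mul_sum]
  have hdiag : (k - 1) * ∑ i ∈ s, ‖x i‖ ^ 2 =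
      ∑ i ∈ s, ∑ j ∈ s, (if i = j then (k - 1) * ‖x i‖ ^ 2 else 0) := by
    rw [Finset.mul_sum]
    refine Finset.sum_congr rfl fun i hi => ?_
    rw [Finset.sum_ite_eq s i (fun _ => (k - 1) * ‖x i‖ ^ 2), if_pos hi]
  rw [hnorm, hsum, hdiag, ← Finset.sum_add_distrib, Finset.mul_sum]
  refine Finset.sum_le_sum fun i hi => ?_
  rw [← Finset.sum_add_distrib, Finset.mul_sum]
  refine Finset.sum_le_sum fun j hj => ?_
  by_cases hij : i = j
  · subst hij
    rw [if_pos rfl, @inner_self_eq_norm_sq 𝕜]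
    nlinarith [sq_nonneg (‖x i‖)]
  · rw [if_neg hij, add_zero]
    rcases lt_or_gt_of_ne hij with hlt | hgt
    · exact h i hi j hj hlt
    · calc ‖x i‖ * ‖x j‖ = ‖x j‖ * ‖x i‖ := mul_comm _ _
        _ ≤ k * RCLike.re (inner 𝕜 (x j) (x i) : 𝕜) := h j hj i hi hgt
        _ = k * RCLike.re (inner 𝕜 (x i) (x j) : 𝕜) := by rw [hre]
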